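/- For p an odd prime, ℤ_p = {a ∈ ℚ_p : ∃ y, 1 + p·a² = y²}. That is, a ∈ ℚ_p satisfies v_p(a) ≥ 0 if and only if 1 + p·a² is a square in ℚ_p. -/

import Mathlib

/-- For `p` an odd prime, `ℤ_p = {a ∈ ℚ_p : ∃ y, 1 + p·a² = y²}`: an element
`a ∈ ℚ_p` lies in `ℤ_p` (i.e. `‖a‖ ≤ 1`, equivalently `v_p(a) ≥ 0`) if and only if
`1 + p·a²` is a square in `ℚ_p`. -/
theorem stmt_17 (p : ℕ) [Fact p.Prime] (hp : p ≠ 2) (a : ℚ_[p]) :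
    ‖a‖ ≤ 1 ↔ ∃ y : ℚ_[p], 1 + (p : ℚ_[p]) * a ^ 2 = y ^ 2 := by
  have hpp : p.Prime := Fact.out
  have hp1 : (1 : ℝ) < p := by exact_mod_cast hpp.one_lt
  constructor
  · intro ha
    -- Hensel's lemma on Y² - (1 + p a²) at Y = 1
    set A : ℤ_[p] := ⟨a, ha⟩ with hA
    set F : Polynomial ℤ_[p] := Polynomial.X ^ 2 - Polynomial.C (1 + p * A ^ 2) with hF
    have heval : F.eval 1 = -(p * A ^ 2) := by
      simp only [hF, Polynomial.eval_sub, Polynomial.eval_pow, Polynomial.eval_X,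
        Polynomial.eval_C]
      ring
    have hderiv : F.derivative.eval 1 = 2 := by
      simp [hF, Polynomial.derivative_pow]
    have h2 : ‖(2 : ℤ_[p])‖ = 1 := by
      have hnd : ¬ ((p : ℤ) ∣ 2) := by
        rw [show ((2 : ℤ)) = ((2 : ℕ) : ℤ) by norm_num, Int.natCast_dvd_natCast]
        intro hdvd
        exact hp ((Nat.prime_dvd_prime_iff_eq hpp Nat.prime_two).mp hdvd)
      have hlt := (PadicInt.norm_int_lt_one_iff_dvd 2).not.mpr hnd
      have hle : ‖((2 : ℤ) : ℤ_[p])‖ ≤ 1 := PadicInt.norm_le_one _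
      push_neg at hlt
      have := le_antisymm hle hlt
      simpa using this
    have hnorm : ‖F.eval 1‖ < ‖F.derivative.eval 1‖ ^ 2 := by
      rw [heval, hderiv, h2, one_pow, norm_neg, norm_mul]
      calc ‖(p : ℤ_[p])‖ * ‖A ^ 2‖ ≤ ‖(p : ℤ_[p])‖ * 1 :=
            mul_le_mul_of_nonneg_left (PadicInt.norm_le_one _) (norm_nonneg _)
        _ = (p : ℝ)⁻¹ := by rw [mul_one, PadicInt.norm_p]
        _ < 1 := by rw [inv_lt_one_iff₀]; right; exact hp1
    obtain ⟨z, hz, -⟩ := hensels_lemma hnorm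
    refine ⟨(z : ℚ_[p]), ?_⟩
    have hz2 : z ^ 2 = 1 + p * A ^ 2 := by
      have := hz
      simp only [hF, Polynomial.eval_sub, Polynomial.eval_pow, Polynomial.eval_X,
        Polynomial.eval_C, sub_eq_zero] at this
      simpa [sub_eq_zero] using this
    have hval := congrArg (Subtype.val) hz2
    push_cast at hval
    exact hval.symm
  · rintro ⟨y, hy⟩
    by_contra h
    push_neg at h
    have ha0 : a ≠ 0 := by
      rintro rfl
      norm_num at h
    have hpa : ‖(p : ℚ_[p]) * a ^ 2‖ = ‖a‖ ^ 2 / p := by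
      rw [norm_mul, norm_pow, Padic.norm_p]
      ring
    have hgt : (1 : ℝ) < ‖(p : ℚ_[p]) * a ^ 2‖ := by
      rw [hpa]
      have hpa' : (p : ℝ) ≤ ‖a‖ := by
        obtain ⟨n, hn⟩ : ∃ n : ℤ, ‖a‖ = (p : ℝ) ^ n := ⟨-a.valuation, Padic.norm_eq_zpow_neg_valuation ha0⟩
        rw [hn] at h ⊢
        have hn1 : 1 ≤ n := by
          by_contra hcon
          push_neg at hcon
          have : (p : ℝ) ^ n ≤ (p : ℝ) ^ (0 : ℤ) :=
            zpow_le_zpow_right₀ (le_of_lt hp1) (by omega)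
          simp only [zpow_zero] at this
          linarith
        calc (p : ℝ) = (p : ℝ) ^ (1 : ℤ) := by simp
          _ ≤ (p : ℝ) ^ n := zpow_le_zpow_right₀ (le_of_lt hp1) hn1
      calc (1 : ℝ) < p := hp1
        _ = p * p / p := by field_simp
        _ ≤ ‖a‖ * ‖a‖ / p := by gcongr <;> linarith
        _ = ‖a‖ ^ 2 / p := by ring
    have hne : ‖(1 : ℚ_[p])‖ ≠ ‖(p : ℚ_[p]) * a ^ 2‖ := by
      rw [norm_one]; exact ne_of_lt hgt
    have hsum : ‖(1 : ℚ_[p]) + (p : ℚ_[p]) * a ^ 2‖ = ‖(p : ℚ_[p]) * a ^ 2‖ := by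
      rw [Padic.add_eq_max_of_ne hne, norm_one, max_eq_right (le_of_lt hgt)]
    have hy0 : y ≠ 0 := by
      rintro rfl
      have h0 : ‖(p : ℚ_[p]) * a ^ 2‖ = 0 := by
        rw [← hsum, hy]
        norm_num
      linarith
    have hval : ‖y‖ ^ 2 = ‖a‖ ^ 2 / p := by
      rw [← hpa, ← hsum, hy, norm_pow]
    obtain ⟨m, hm⟩ : ∃ m : ℤ, ‖y‖ = (p : ℝ) ^ m := ⟨-y.valuation, Padic.norm_eq_zpow_neg_valuation hy0⟩
    obtain ⟨n, hn⟩ : ∃ n : ℤ, ‖a‖ = (p : ℝ) ^ n := ⟨-a.valuation, Padic.norm_eq_zpow_neg_valuation ha0⟩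
    rw [hm, hn] at hval
    have hp0 : (p : ℝ) ≠ 0 := by positivity
    have e1 : ((p : ℝ) ^ m) ^ (2 : ℕ) = (p : ℝ) ^ (2 * m) := by
      rw [← zpow_natCast ((p : ℝ) ^ m) 2, ← zpow_mul, mul_comm]
      norm_num
    have e2 : ((p : ℝ) ^ n) ^ (2 : ℕ) = (p : ℝ) ^ (2 * n) := by
      rw [← zpow_natCast ((p : ℝ) ^ n) 2, ← zpow_mul, mul_comm]
      norm_num
    rw [e1, e2] at hval
    have hfin : (p : ℝ) ^ (2 * m) = (p : ℝ) ^ (2 * n - 1) := by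
      rw [zpow_sub₀ hp0, zpow_one, hval]
    have := zpow_right_injective₀ (by positivity : (0 : ℝ) < p) hp1.ne' hfin
    omega
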